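/- (Necessary and sufficient conditions for power-expansion Braess' paradox: derivative formulas in the line capacities.) Let K ≥ 1, let ᾱ ∈ ℝ^{K×K} be symmetric, Q̂ ∈ ℝ^K with all entries positive, ρ > 0, μ̂ ∈ ℝ^K, β̂ ∈ ℝ^K, Ŝ ∈ ℝ^{K×m_P}, and suppose Γ := ᾱ + ρ²·diag(Q̂) is invertible with D := 1ᵀΓ⁻¹1 ≠ 0; set B̂_ul⁻¹ := Γ⁻¹ − D⁻¹Γ⁻¹11ᵀΓ⁻¹. For f̄ ∈ ℝ^{m_P} let f̂(f̄) := Ŝ·f̄, x̂(f̄) := −B̂_ul⁻¹·(β̂ + ρ·diag(Q̂)·f̂(f̄) + ρ·μ̂) + D⁻¹·Γ⁻¹1, λ̂(f̄) := diag(Q̂)·(ρ·x̂(f̄) + f̂(f̄)) + μ̂, Φ_T(f̄) := x̂(f̄)ᵀᾱ·x̂(f̄) + β̂ᵀx̂(f̄), and Φ_P(f̄) := ∑_k [ (1/2)·Q̂_k·(ρ·x̂_k(f̄) + f̂_k(f̄))² + μ̂_k·(ρ·x̂_k(f̄) + f̂_k(f̄)) ]. Then for every line index ℓ, ∂Φ_T/∂f̄_ℓ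 = −ρ·(2·ᾱ·x̂(f̄) + β̂)ᵀ·B̂_ul⁻¹·diag(Q̂)·Ŝ·e_ℓ and ∂Φ_P/∂f̄_ℓ = λ̂(f̄)ᵀ·(I − ρ²·B̂_ul⁻¹·diag(Q̂))·Ŝ·e_ℓ, where e_ℓ is the ℓ-th standard basis vector. Consequently, a type P-T (resp. P-P) Braess' paradox occurs if and only if the first (resp. second) expression is strictly positive for some ℓ. -/

import Mathlib

open Matrix

private lemma quad_deriv (a b c0 c : ℝ) :
    HasDerivAt (fun t : ℝ => a * (t - c) ^ 2 + b * (t - c) + c0) b c := by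
  have h1 : HasDerivAt (fun t : ℝ => t - c) 1 c := (hasDerivAt_id c).sub_const c
  have h2 : HasDerivAt (fun t : ℝ => (t - c) ^ 2) ((2 : ℕ) * (c - c) ^ (2 - 1) * 1) c :=
    h1.pow 2
  have := ((h2.const_mul a).add (h1.const_mul b)).add_const c0
  simpa using this

/-- Aggregated coupled system: partial derivatives of the transportation and power social
costs with respect to the line capacities `f̄_ℓ`:
`∂Φ_T/∂f̄_ℓ = −ρ (2ᾱx̂ + β̂)ᵀ B̂_ul⁻¹ diag(Q̂) Ŝ e_ℓ` and
`∂Φ_P/∂f̄_ℓ = λ̂ᵀ (I − ρ² B̂_ul⁻¹ diag(Q̂)) Ŝ e_ℓ`; a type P-T (resp. P-P) Braess'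
paradox occurs iff the first (resp. second) expression is strictly positive for some ℓ. -/
theorem PBP_capacity_derivatives {K mP : ℕ} (hK : 1 ≤ K)
    (abar : Matrix (Fin K) (Fin K) ℝ) (habar : abarᵀ = abar)
    (Qhat : Fin K → ℝ) (hQ : ∀ k, 0 < Qhat k)
    (ρ : ℝ) (hρ : 0 < ρ)
    (muhat bhat : Fin K → ℝ) (Shat : Matrix (Fin K) (Fin mP) ℝ)
    (hΓ : IsUnit (abar + ρ ^ 2 • Matrix.diagonal Qhat))
    (hD : (1 : Fin K → ℝ) ⬝ᵥ (abar + ρ ^ 2 • Matrix.diagonal Qhat)⁻¹.mulVec 1 ≠ 0) :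
    let Γ : Matrix (Fin K) (Fin K) ℝ := abar + ρ ^ 2 • Matrix.diagonal Qhat
    let D : ℝ := (1 : Fin K → ℝ) ⬝ᵥ Γ⁻¹.mulVec 1
    let onesKK : Matrix (Fin K) (Fin K) ℝ := Matrix.of fun _ _ => (1 : ℝ)
    let Bul : Matrix (Fin K) (Fin K) ℝ := Γ⁻¹ - D⁻¹ • (Γ⁻¹ * onesKK * Γ⁻¹)
    let fhat : (Fin mP → ℝ) → Fin K → ℝ := fun fb => Shat.mulVec fb
    let xhat : (Fin mP → ℝ) → Fin K → ℝ := fun fb =>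
      -(Bul.mulVec (bhat + ρ • (Matrix.diagonal Qhat).mulVec (fhat fb) + ρ • muhat)) +
        D⁻¹ • Γ⁻¹.mulVec 1
    let lamhat : (Fin mP → ℝ) → Fin K → ℝ := fun fb =>
      (Matrix.diagonal Qhat).mulVec (ρ • xhat fb + fhat fb) + muhat
    let ΦT : (Fin mP → ℝ) → ℝ := fun fb =>
      xhat fb ⬝ᵥ abar.mulVec (xhat fb) + bhat ⬝ᵥ xhat fb
    let ΦP : (Fin mP → ℝ) → ℝ := fun fb =>
      ∑ k, ((1 / 2) * Qhat k * (ρ * xhat fb k + fhat fb k) ^ 2 +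
        muhat k * (ρ * xhat fb k + fhat fb k))
    let dT : (Fin mP → ℝ) → Fin mP → ℝ := fun fb ℓ =>
      -(ρ * (((2 : ℝ) • abar.mulVec (xhat fb) + bhat) ⬝ᵥ
        (Bul * Matrix.diagonal Qhat * Shat).mulVec (Pi.single ℓ 1)))
    let dP : (Fin mP → ℝ) → Fin mP → ℝ := fun fb ℓ =>
      lamhat fb ⬝ᵥ
        (((1 : Matrix (Fin K) (Fin K) ℝ) - ρ ^ 2 • (Bul * Matrix.diagonal Qhat)) *
          Shat).mulVec (Pi.single ℓ 1)
    ∀ fb : Fin mP → ℝ,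
      (∀ ℓ : Fin mP,
        HasDerivAt (fun t : ℝ => ΦT (Function.update fb ℓ t)) (dT fb ℓ) (fb ℓ) ∧
        HasDerivAt (fun t : ℝ => ΦP (Function.update fb ℓ t)) (dP fb ℓ) (fb ℓ)) ∧
      ((∃ (ℓ : Fin mP) (Dv : ℝ),
          HasDerivAt (fun t : ℝ => ΦT (Function.update fb ℓ t)) Dv (fb ℓ) ∧ 0 < Dv) ↔
        ∃ ℓ : Fin mP, 0 < dT fb ℓ) ∧
      ((∃ (ℓ : Fin mP) (Dv : ℝ),
          HasDerivAt (fun t : ℝ => ΦP (Function.update fb ℓ t)) Dv (fb ℓ) ∧ 0 < Dv) ↔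
        ∃ ℓ : Fin mP, 0 < dP fb ℓ) := by
  intro Γ D onesKK Bul fhat xhat lamhat ΦT ΦP dT dP fb
  have main : ∀ ℓ : Fin mP,
      HasDerivAt (fun t : ℝ => ΦT (Function.update fb ℓ t)) (dT fb ℓ) (fb ℓ) ∧
      HasDerivAt (fun t : ℝ => ΦP (Function.update fb ℓ t)) (dP fb ℓ) (fb ℓ) := by
    intro ℓ
    set c : ℝ := fb ℓ with hc
    set e : Fin mP → ℝ := Pi.single ℓ 1 with he
    set v : Fin K → ℝ := Shat.mulVec e with hv
    set u : Fin K → ℝ := (-ρ) • (Bul * Matrix.diagonal Qhat * Shat).mulVec e with hu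
    have hupd : ∀ t : ℝ, Function.update fb ℓ t = fb + (t - c) • e := by
      intro t; funext j
      by_cases h : j = ℓ
      · subst h; simp [he, hc]
      · simp [Function.update, h, he, Pi.single_eq_of_ne h]
    have hfv : ∀ t : ℝ, fhat (Function.update fb ℓ t) = fhat fb + (t - c) • v := by
      intro t
      simp only [fhat, hupd t, Matrix.mulVec_add, Matrix.mulVec_smul, hv]
    have hx : ∀ t : ℝ, xhat (Function.update fb ℓ t) = xhat fb + (t - c) • u := by
      intro t
      simp only [xhat, hfv t, hu, Matrix.mulVec_add, Matrix.mulVec_smul,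
        Matrix.smul_mulVec, ← Matrix.mulVec_mulVec]
      funext k
      simp only [Pi.add_apply, Pi.neg_apply, Pi.smul_apply, smul_eq_mul, neg_mul]
      ring
    -- ΦT part
    have hT : HasDerivAt (fun t : ℝ => ΦT (Function.update fb ℓ t)) (dT fb ℓ) c := by
      have hfun : (fun t : ℝ => ΦT (Function.update fb ℓ t)) =
          fun t : ℝ => (u ⬝ᵥ abar.mulVec u) * (t - c) ^ 2 +
            (xhat fb ⬝ᵥ abar.mulVec u + u ⬝ᵥ abar.mulVec (xhat fb) + bhat ⬝ᵥ u) * (t - c) +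
            ΦT fb := by
        funext t
        simp only [ΦT, hx t, Matrix.mulVec_add, Matrix.mulVec_smul, dotProduct_add,
          add_dotProduct, smul_dotProduct, dotProduct_smul, smul_eq_mul]
        ring
      rw [hfun]
      have hd : xhat fb ⬝ᵥ abar.mulVec u + u ⬝ᵥ abar.mulVec (xhat fb) + bhat ⬝ᵥ u
          = dT fb ℓ := by
        have h1 : xhat fb ⬝ᵥ abar.mulVec u = abar.mulVec (xhat fb) ⬝ᵥ u := by
          rw [Matrix.dotProduct_mulVec, ← Matrix.mulVec_transpose, habar]
        have h2 : u ⬝ᵥ abar.mulVec (xhat fb) = abar.mulVec (xhat fb) ⬝ᵥ u :=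
          dotProduct_comm _ _
        rw [h1, h2]
        simp only [dT, hu, add_dotProduct, smul_dotProduct, dotProduct_smul, smul_eq_mul]
        ring
      rw [← hd]
      exact quad_deriv _ _ _ c
    -- ΦP part
    have hP : HasDerivAt (fun t : ℝ => ΦP (Function.update fb ℓ t)) (dP fb ℓ) c := by
      set w : Fin K → ℝ := ρ • u + v with hw
      have hfun : (fun t : ℝ => ΦP (Function.update fb ℓ t)) =
          fun t : ℝ => (∑ k, (1 / 2) * Qhat k * w k ^ 2) * (t - c) ^ 2 +
            (∑ k, (Qhat k * (ρ * xhat fb k + fhat fb k) + muhat k) * w k) * (t - c) +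
            ΦP fb := by
        funext t
        simp only [ΦP, hx t, hfv t, hw, Pi.add_apply, Pi.smul_apply, smul_eq_mul]
        rw [Finset.sum_mul, Finset.sum_mul, ← Finset.sum_add_distrib, ← Finset.sum_add_distrib]
        refine Finset.sum_congr rfl fun k _ => by ring
      rw [hfun]
      have hd : (∑ k, (Qhat k * (ρ * xhat fb k + fhat fb k) + muhat k) * w k) = dP fb ℓ := by
        have hwe : (((1 : Matrix (Fin K) (Fin K) ℝ) - ρ ^ 2 • (Bul * Matrix.diagonal Qhat)) *
            Shat).mulVec e = w := by
          simp only [Matrix.sub_mul, Matrix.one_mul, Matrix.smul_mul, Matrix.sub_mulVec,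
            Matrix.smul_mulVec, hw, hu, hv]
          funext k
          simp only [Pi.sub_apply, Pi.add_apply, Pi.smul_apply, smul_eq_mul]
          ring
        simp only [dP, ← he, hwe, dotProduct, lamhat, Pi.add_apply, mulVec_diagonal,
          Pi.smul_apply, smul_eq_mul]
      rw [← hd]
      exact quad_deriv _ _ _ c
    exact ⟨hT, hP⟩
  refine ⟨main, ?_, ?_⟩
  · constructor
    · rintro ⟨ℓ, Dv, hDv, hpos⟩
      exact ⟨ℓ, by rwa [← hDv.unique (main ℓ).1]⟩
    · rintro ⟨ℓ, hpos⟩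
      exact ⟨ℓ, dT fb ℓ, (main ℓ).1, hpos⟩
  · constructor
    · rintro ⟨ℓ, Dv, hDv, hpos⟩
      exact ⟨ℓ, by rwa [← hDv.unique (main ℓ).2]⟩
    · rintro ⟨ℓ, hpos⟩
      exact ⟨ℓ, dP fb ℓ, (main ℓ).2, hpos⟩
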